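/- Let D be a digraph with vertices {1,...,n}, and let f = ∏_{(v,w) ∈ E(D)} ( Σ_{u ∈ N_D(w) \ N_D(v)} x_u − Σ_{u ∈ N_D(v) \ N_D(w)} x_u ). Then the coefficient of the monomial ∏_{v} x_v^{d⁺_D(v)} in the expansion of f equals EE(W(D)) − EO(W(D)). -/

import Mathlib

open Finset MvPolynomial

/-- Out-degree of `v` in the digraph with arc set `S`. -/
def outDeg {α : Type*} [DecidableEq α] (S : Finset (α × α)) (v : α) : ℕ :=
  (S.filter fun p => p.1 = v).card

/-- In-degree of `v` in the digraph with arc set `S`. -/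
def inDeg {α : Type*} [DecidableEq α] (S : Finset (α × α)) (v : α) : ℕ :=
  (S.filter fun p => p.2 = v).card

/-- A digraph (arc set) is Eulerian if every vertex has equal in- and out-degree. -/
def IsEulerian {α : Type*} [DecidableEq α] (S : Finset (α × α)) : Prop :=
  ∀ v, outDeg S v = inDeg S v

instance {α : Type*} [DecidableEq α] [Fintype α] (S : Finset (α × α)) :
    Decidable (IsEulerian S) := by
  unfold IsEulerian; infer_instance

/-- Number of spanning Eulerian subdigraphs of `H` with an even number of edges. -/
def EE {α : Type*} [DecidableEq α] [Fintype α] (H : Finset (α × α)) : ℕ :=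
  (H.powerset.filter fun S => IsEulerian S ∧ Even S.card).card

/-- Number of spanning Eulerian subdigraphs of `H` with an odd number of edges. -/
def EO {α : Type*} [DecidableEq α] [Fintype α] (H : Finset (α × α)) : ℕ :=
  (H.powerset.filter fun S => IsEulerian S ∧ Odd S.card).card

/-- A digraph `H` contains a directed cycle of length `n`. -/
def HasDicycleLen {α : Type*} (H : Finset (α × α)) (n : ℕ) : Prop :=
  0 < n ∧ ∃ c : ZMod n → α, Function.Injective c ∧ ∀ i, (c i, c (i + 1)) ∈ H

/-- `A` is an orientation of the simple graph `G`. -/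
def IsOrientation {V : Type*} (G : SimpleGraph V) (A : Finset (V × V)) : Prop :=
  (∀ v w, G.Adj v w ↔ ((v, w) ∈ A ∨ (w, v) ∈ A)) ∧
  (∀ v w, (v, w) ∈ A → (w, v) ∉ A)

/-- Neighborhood `N_D(v)` in the digraph with arc set `A` (neighbors in either direction). -/
def nbr {V : Type*} [Fintype V] [DecidableEq V] (A : Finset (V × V)) (v : V) : Finset V :=
  Finset.univ.filter fun x => (v, x) ∈ A ∨ (x, v) ∈ A

/-- Closed neighborhood `N_D[v]`. -/
def nbrC {V : Type*} [Fintype V] [DecidableEq V] (A : Finset (V × V)) (v : V) : Finset V :=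
  insert v (nbr A v)

/-- Vertex type of `W(D)`: starred vertices `x*`, sector vertices `x^{vw}`,
and middle vertices `y^{vw}_x`. -/
abbrev WV (V : Type*) := V ⊕ ((V × V) × V) ⊕ ((V × V) × V)


instance {V : Type*} [DecidableEq V] : DecidableEq (WV V) :=
  inferInstanceAs (DecidableEq (V ⊕ ((V × V) × V) ⊕ ((V × V) × V)))

instance {V : Type*} [Fintype V] [DecidableEq V] : Fintype (WV V) :=
  inferInstanceAs (Fintype (V ⊕ ((V × V) × V) ⊕ ((V × V) × V)))

/-- The starred vertex `x*`. -/
def vstar {V : Type*} (x : V) : WV V := Sum.inl x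

/-- The sector vertex `x^{vw}` (for `e = (v,w)`). -/
def vsec {V : Type*} (e : V × V) (x : V) : WV V := Sum.inr (Sum.inl (e, x))

/-- The middle vertex `y^{vw}_x` (for `e = (v,w)`). -/
def vmid {V : Type*} (e : V × V) (x : V) : WV V := Sum.inr (Sum.inr (e, x))

/-- The set `N_D[v] △ N_D(w)` of possible endpoints of γ-paths through the `vw`-sector. -/
def gammaEnds {V : Type*} [Fintype V] [DecidableEq V] (A : Finset (V × V)) (e : V × V) :
    Finset V :=
  (nbrC A e.1 ∪ nbr A e.2) \ (nbrC A e.1 ∩ nbr A e.2)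

/-- The arc set of the digraph `W(D)` built from the digraph with arc set `A`. -/
def WArcSet {V : Type*} [Fintype V] [DecidableEq V] (A : Finset (V × V)) :
    Finset (WV V × WV V) :=
  (A.image fun e => (vstar e.1, vsec e e.1)) ∪
  (A.biUnion fun e => (nbr A e.1 \ nbr A e.2).image fun x => (vsec e e.1, vsec e x)) ∪
  (A.biUnion fun e => (nbr A e.2 \ nbrC A e.1).image fun x => (vsec e e.1, vmid e x)) ∪
  (A.biUnion fun e => (nbr A e.2 \ nbrC A e.1).image fun x => (vmid e x, vsec e x)) ∪
  (A.biUnion fun e => (gammaEnds A e).image fun x => (vsec e x, vstar x))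

/-- The γ-path `P(v,w;x)` from `v*` through the `vw`-sector to `x*`, as a set of arcs. -/
def gammaPath {V : Type*} [Fintype V] [DecidableEq V] (A : Finset (V × V)) (e : V × V)
    (x : V) : Finset (WV V × WV V) :=
  if x ∈ nbr A e.2 \ nbrC A e.1 then
    {(vstar e.1, vsec e e.1), (vsec e e.1, vmid e x), (vmid e x, vsec e x), (vsec e x, vstar x)}
  else
    {(vstar e.1, vsec e e.1), (vsec e e.1, vsec e x), (vsec e x, vstar x)}

/-- `ℓ` is an additive coloring of `G`. -/
def IsAdditiveColoring {V : Type*} [Fintype V] [DecidableEq V] (G : SimpleGraph V)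
    [DecidableRel G.Adj] (ℓ : V → ℕ) : Prop :=
  ∀ v w, G.Adj v w →
    ∑ u ∈ G.neighborFinset v, ℓ u ≠ ∑ u ∈ G.neighborFinset w, ℓ u
section AuxDefs
set_option linter.unusedSectionVars false

variable {V : Type*} [Fintype V] [DecidableEq V]

/-- The "minus" endpoint set `N(v) \ N(w)` for arc `e = (v,w)`. -/
def Mset (A : Finset (V × V)) (e : V × V) : Finset V := nbr A e.1 \ nbr A e.2

/-- The "plus" endpoint set `N(w) \ N(v)`. -/
def Pset (A : Finset (V × V)) (e : V × V) : Finset V := nbr A e.2 \ nbr A e.1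

/-- All possible endpoint choices. -/
def Tset (A : Finset (V × V)) (e : V × V) : Finset V := Pset A e ∪ Mset A e

/-- Endpoints requiring a middle vertex. -/
def MidSet (A : Finset (V × V)) (e : V × V) : Finset V := nbr A e.2 \ nbrC A e.1

/-- The sign attached to endpoint choice `u` in sector `e`. -/
def sgn (A : Finset (V × V)) (e : V × V) (u : V) : ℝ := if u ∈ Mset A e then -1 else 1

/-- Arcs of `W(D)`, by shape. -/
def arc1 (e : V × V) : WV V × WV V := (vstar e.1, vsec e e.1)

def arc2 (e : V × V) (x : V) : WV V × WV V := (vsec e e.1, vsec e x)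

def arc3 (e : V × V) (x : V) : WV V × WV V := (vsec e e.1, vmid e x)

def arc4 (e : V × V) (x : V) : WV V × WV V := (vmid e x, vsec e x)

def arc5 (e : V × V) (x : V) : WV V × WV V := (vsec e x, vstar x)

/-- The sector an arc of `W(D)` belongs to. -/
def secOf {V : Type*} : WV V × WV V → Option (V × V)
  | (_, Sum.inr (Sum.inl (e, _))) => some e
  | (_, Sum.inr (Sum.inr (e, _))) => some e
  | (Sum.inr (Sum.inl (e, _)), Sum.inl _) => some e
  | (Sum.inr (Sum.inr (e, _)), Sum.inl _) => some e
  | (Sum.inl _, Sum.inl _) => none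

section Basic
variable {A : Finset (V × V)} {e : V × V} {x v : V}

lemma mem_nbr : x ∈ nbr A v ↔ (v, x) ∈ A ∨ (x, v) ∈ A := by simp [nbr]

lemma not_mem_nbr_self (hs : ∀ v, (v, v) ∉ A) (v : V) : v ∉ nbr A v := by
  simp [mem_nbr, hs v]

lemma src_mem_nbr (he : e ∈ A) : e.1 ∈ nbr A e.2 := by
  rw [mem_nbr]; right; simpa using he

lemma src_mem_Pset (hs : ∀ v, (v, v) ∉ A) (he : e ∈ A) : e.1 ∈ Pset A e := by
  rw [Pset, Finset.mem_sdiff]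
  exact ⟨src_mem_nbr he, not_mem_nbr_self hs e.1⟩

lemma src_not_mem_Mset (hs : ∀ v, (v, v) ∉ A) : e.1 ∉ Mset A e := by
  rw [Mset, Finset.mem_sdiff]
  intro h
  exact not_mem_nbr_self hs e.1 h.1

lemma mem_MidSet_iff : x ∈ MidSet A e ↔ x ∈ Pset A e ∧ x ≠ e.1 := by
  simp only [MidSet, Pset, nbrC, Finset.mem_sdiff, Finset.mem_insert]
  tauto

lemma mem_Mset_of_not_mid (hx : x ∈ Tset A e) (hne : x ≠ e.1) (h : x ∉ MidSet A e) :
    x ∈ Mset A e := by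
  rw [mem_MidSet_iff] at h
  rw [Tset, Finset.mem_union] at hx
  tauto

lemma MidSet_disj_Mset (hx : x ∈ MidSet A e) : x ∉ Mset A e := by
  rw [mem_MidSet_iff, Pset, Finset.mem_sdiff] at hx
  rw [Mset, Finset.mem_sdiff]
  tauto

lemma mid_ne_src (hx : x ∈ MidSet A e) : x ≠ e.1 := (mem_MidSet_iff.1 hx).2

lemma mset_ne_src (hs : ∀ v, (v, v) ∉ A) (hx : x ∈ Mset A e) : x ≠ e.1 := by
  rintro rfl; exact src_not_mem_Mset hs hx

lemma mem_gammaEnds_iff (hs : ∀ v, (v, v) ∉ A) (he : e ∈ A) :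
    x ∈ gammaEnds A e ↔ x ∈ Tset A e ∧ x ≠ e.1 := by
  have h1 : e.1 ∈ nbr A e.2 := src_mem_nbr he
  have h2 : e.1 ∉ nbr A e.1 := not_mem_nbr_self hs e.1
  simp only [gammaEnds, Tset, Pset, Mset, nbrC, Finset.mem_sdiff, Finset.mem_union,
    Finset.mem_inter, Finset.mem_insert]
  constructor
  · rintro ⟨h3, h4⟩
    rcases h3 with (rfl | h3) | h3
    · exact absurd ⟨Or.inl rfl, h1⟩ h4
    all_goals
      refine ⟨?_, ?_⟩
      · tauto
      · rintro rfl; tauto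
  · rintro ⟨h3, h4⟩
    constructor
    · tauto
    · rintro ⟨_, _⟩; tauto

end Basic

end AuxDefs
section AuxPath
set_option linter.unusedSectionVars false
variable {V : Type*} [Fintype V] [DecidableEq V]
variable {A : Finset (V × V)} {e e' : V × V} {x y v : V} {a : WV V × WV V}

lemma gammaPath_mid (hx : x ∈ MidSet A e) :
    gammaPath A e x = {arc1 e, arc3 e x, arc4 e x, arc5 e x} := by
  rw [MidSet] at hx
  rw [gammaPath, if_pos hx]; rfl

lemma gammaPath_not_mid (hx : x ∉ MidSet A e) :
    gammaPath A e x = {arc1 e, arc2 e x, arc5 e x} := by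
  rw [MidSet] at hx
  rw [gammaPath, if_neg hx]; rfl

@[simp] lemma secOf_arc1 : secOf (arc1 e) = some e := rfl
@[simp] lemma secOf_arc2 : secOf (arc2 e x) = some e := rfl
@[simp] lemma secOf_arc3 : secOf (arc3 e x) = some e := rfl
@[simp] lemma secOf_arc4 : secOf (arc4 e x) = some e := rfl
@[simp] lemma secOf_arc5 : secOf (arc5 e x) = some e := rfl

lemma secOf_gammaPath (h : a ∈ gammaPath A e x) : secOf a = some e := by
  by_cases hx : x ∈ MidSet A e
  · rw [gammaPath_mid hx] at h
    simp only [Finset.mem_insert, Finset.mem_singleton] at h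
    rcases h with rfl | rfl | rfl | rfl <;> simp
  · rw [gammaPath_not_mid hx] at h
    simp only [Finset.mem_insert, Finset.mem_singleton] at h
    rcases h with rfl | rfl | rfl <;> simp

lemma arc5_mem_gammaPath (h : arc5 e x ∈ gammaPath A e' y) : e' = e ∧ y = x := by
  by_cases hy : y ∈ MidSet A e'
  · rw [gammaPath_mid hy] at h
    simp only [Finset.mem_insert, Finset.mem_singleton, arc1, arc3, arc4, arc5,
      vstar, vsec, vmid, Prod.mk.injEq] at h
    rcases h with ⟨h1, _⟩ | ⟨_, h2⟩ | ⟨h1, _⟩ | ⟨h1, h2⟩ <;> simp_all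
  · rw [gammaPath_not_mid hy] at h
    simp only [Finset.mem_insert, Finset.mem_singleton, arc1, arc2, arc5,
      vstar, vsec, vmid, Prod.mk.injEq] at h
    rcases h with ⟨h1, _⟩ | ⟨_, h2⟩ | ⟨h1, h2⟩ <;> simp_all

lemma gammaPath_subset (hs : ∀ v, (v, v) ∉ A) (he : e ∈ A) (hx : x ∈ Tset A e)
    (hne : x ≠ e.1) : gammaPath A e x ⊆ WArcSet A := by
  have hg : x ∈ gammaEnds A e := (mem_gammaEnds_iff hs he).2 ⟨hx, hne⟩
  intro a ha
  rw [WArcSet]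
  simp only [Finset.mem_union, Finset.mem_image, Finset.mem_biUnion]
  by_cases hmid : x ∈ MidSet A e
  · rw [gammaPath_mid hmid] at ha
    have hmid' : x ∈ nbr A e.2 \ nbrC A e.1 := hmid
    simp only [Finset.mem_insert, Finset.mem_singleton] at ha
    rcases ha with rfl | rfl | rfl | rfl
    · exact Or.inl (Or.inl (Or.inl (Or.inl ⟨e, he, rfl⟩)))
    · exact Or.inl (Or.inl (Or.inr ⟨e, he, x, hmid', rfl⟩))
    · exact Or.inl (Or.inr ⟨e, he, x, hmid', rfl⟩)
    · exact Or.inr ⟨e, he, x, hg, rfl⟩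
  · have hM : x ∈ Mset A e := mem_Mset_of_not_mid hx hne hmid
    have hM' : x ∈ nbr A e.1 \ nbr A e.2 := hM
    rw [gammaPath_not_mid hmid] at ha
    simp only [Finset.mem_insert, Finset.mem_singleton] at ha
    rcases ha with rfl | rfl | rfl
    · exact Or.inl (Or.inl (Or.inl (Or.inl ⟨e, he, rfl⟩)))
    · exact Or.inl (Or.inl (Or.inl (Or.inr ⟨e, he, x, hM', rfl⟩)))
    · exact Or.inr ⟨e, he, x, hg, rfl⟩

/-- Shape elimination for arcs of `W(D)`. -/
lemma mem_WArcSet_elim (ha : a ∈ WArcSet A) :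
    (∃ e ∈ A, a = arc1 e) ∨ (∃ e ∈ A, ∃ x ∈ Mset A e, a = arc2 e x) ∨
    (∃ e ∈ A, ∃ x ∈ MidSet A e, a = arc3 e x) ∨
    (∃ e ∈ A, ∃ x ∈ MidSet A e, a = arc4 e x) ∨
    (∃ e ∈ A, ∃ x ∈ gammaEnds A e, a = arc5 e x) := by
  rw [WArcSet] at ha
  simp only [Finset.mem_union, Finset.mem_image, Finset.mem_biUnion] at ha
  rcases ha with ((((⟨e, he, rfl⟩ | ⟨e, he, x, hx, rfl⟩) | ⟨e, he, x, hx, rfl⟩) |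
    ⟨e, he, x, hx, rfl⟩) | ⟨e, he, x, hx, rfl⟩)
  · exact Or.inl ⟨e, he, rfl⟩
  · exact Or.inr (Or.inl ⟨e, he, x, hx, rfl⟩)
  · exact Or.inr (Or.inr (Or.inl ⟨e, he, x, hx, rfl⟩))
  · exact Or.inr (Or.inr (Or.inr (Or.inl ⟨e, he, x, hx, rfl⟩)))
  · exact Or.inr (Or.inr (Or.inr (Or.inr ⟨e, he, x, hx, rfl⟩)))

end AuxPath
section AuxPhi
set_option linter.unusedSectionVars false
variable {V : Type*} [Fintype V] [DecidableEq V]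
variable {A : Finset (V × V)} {e e' : V × V} {x y v : V} {a : WV V × WV V}

/-- Pairwise distinctness of path arcs. -/
lemma path_arcs_distinct (hne : x ≠ e.1) :
    arc1 e ∉ ({arc3 e x, arc4 e x, arc5 e x} : Finset (WV V × WV V)) ∧
    arc3 e x ∉ ({arc4 e x, arc5 e x} : Finset (WV V × WV V)) ∧
    arc4 e x ∉ ({arc5 e x} : Finset (WV V × WV V)) ∧
    arc1 e ∉ ({arc2 e x, arc5 e x} : Finset (WV V × WV V)) ∧
    arc2 e x ∉ ({arc5 e x} : Finset (WV V × WV V)) := by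
  have hne' : e.1 ≠ x := Ne.symm hne
  refine ⟨?_, ?_, ?_, ?_, ?_⟩ <;>
    simp [arc1, arc2, arc3, arc4, arc5, vstar, vsec, vmid, Prod.mk.injEq, hne, hne']

lemma card_gammaPath (hne : x ≠ e.1) :
    (gammaPath A e x).card = if x ∈ MidSet A e then 4 else 3 := by
  obtain ⟨h1, h2, h3, h4, h5⟩ := path_arcs_distinct hne
  by_cases hmid : x ∈ MidSet A e
  · rw [gammaPath_mid hmid, if_pos hmid]
    rw [Finset.card_insert_of_notMem h1, Finset.card_insert_of_notMem h2,
      Finset.card_insert_of_notMem h3, Finset.card_singleton]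
  · rw [gammaPath_not_mid hmid, if_neg hmid]
    rw [Finset.card_insert_of_notMem h4, Finset.card_insert_of_notMem h5,
      Finset.card_singleton]

lemma deg_path_balance (hne : x ≠ e.1) (w : WV V) :
    outDeg (gammaPath A e x) w + (if vstar x = w then 1 else 0)
      = inDeg (gammaPath A e x) w + (if vstar e.1 = w then 1 else 0) := by
  obtain ⟨h1, h2, h3, h4, h5⟩ := path_arcs_distinct hne
  have hvv : (vsec e e.1 : WV V) ≠ vsec e x := by
    simp [vsec, Prod.ext_iff]; exact fun h => hne h.symm
  by_cases hmid : x ∈ MidSet A e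
  · rw [gammaPath_mid hmid]
    rw [outDeg, inDeg, Finset.card_filter, Finset.card_filter,
      Finset.sum_insert h1, Finset.sum_insert h2, Finset.sum_insert h3,
      Finset.sum_singleton, Finset.sum_insert h1, Finset.sum_insert h2,
      Finset.sum_insert h3, Finset.sum_singleton]
    simp only [arc1, arc3, arc4, arc5]
    grind
  · rw [gammaPath_not_mid hmid]
    rw [outDeg, inDeg, Finset.card_filter, Finset.card_filter,
      Finset.sum_insert h4, Finset.sum_insert h5, Finset.sum_singleton,
      Finset.sum_insert h4, Finset.sum_insert h5, Finset.sum_singleton]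
    simp only [arc1, arc2, arc5]
    split_ifs <;> grind

lemma outDeg_biUnion {ι : Type*} [DecidableEq ι] {α : Type*} [DecidableEq α] (s : Finset ι)
    (f : ι → Finset (α × α)) (h : ∀ i ∈ s, ∀ j ∈ s, i ≠ j → Disjoint (f i) (f j)) (v : α) :
    outDeg (s.biUnion f) v = ∑ i ∈ s, outDeg (f i) v := by
  unfold outDeg
  rw [Finset.filter_biUnion, Finset.card_biUnion]
  intro i hi j hj hij
  exact Finset.disjoint_filter_filter (h i hi j hj hij)

lemma inDeg_biUnion {ι : Type*} [DecidableEq ι] {α : Type*} [DecidableEq α] (s : Finset ι)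
    (f : ι → Finset (α × α)) (h : ∀ i ∈ s, ∀ j ∈ s, i ≠ j → Disjoint (f i) (f j)) (v : α) :
    inDeg (s.biUnion f) v = ∑ i ∈ s, inDeg (f i) v := by
  unfold inDeg
  rw [Finset.filter_biUnion, Finset.card_biUnion]
  intro i hi j hj hij
  exact Finset.disjoint_filter_filter (h i hi j hj hij)

/-- The union of γ-paths determined by an endpoint choice function `p`. -/
def Phi (A : Finset (V × V)) (p : (e : V × V) → e ∈ A → V) : Finset (WV V × WV V) :=
  A.attach.biUnion fun e => if p e.1 e.2 = e.1.1 then ∅ else gammaPath A e.1 (p e.1 e.2)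

lemma mem_ite_empty {β : Type*} {c : Prop} [Decidable c] {s : Finset β} {a : β} :
    a ∈ (if c then (∅ : Finset β) else s) ↔ ¬c ∧ a ∈ s := by
  split <;> simp [*]

lemma mem_Phi {p : (e : V × V) → e ∈ A → V} :
    a ∈ Phi A p ↔ ∃ e : {z // z ∈ A}, p e.1 e.2 ≠ e.1.1 ∧ a ∈ gammaPath A e.1 (p e.1 e.2) := by
  simp [Phi, Finset.mem_biUnion, mem_ite_empty]

lemma Phi_pieces_disjoint (p : (e : V × V) → e ∈ A → V) :
    ∀ i ∈ A.attach, ∀ j ∈ A.attach, i ≠ j →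
      Disjoint (if p i.1 i.2 = i.1.1 then (∅ : Finset (WV V × WV V)) else gammaPath A i.1 (p i.1 i.2))
        (if p j.1 j.2 = j.1.1 then ∅ else gammaPath A j.1 (p j.1 j.2)) := by
  intro i _ j _ hij
  rw [Finset.disjoint_left]
  intro a ha ha'
  rw [mem_ite_empty] at ha ha'
  have h1 := secOf_gammaPath ha.2
  have h2 := secOf_gammaPath ha'.2
  rw [h1] at h2
  exact hij (Subtype.ext (Option.some_injective _ h2))

lemma card_Phi (p : (e : V × V) → e ∈ A → V) :
    (Phi A p).card = ∑ e ∈ A.attach,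
      (if p e.1 e.2 = e.1.1 then 0 else if p e.1 e.2 ∈ MidSet A e.1 then 4 else 3) := by
  rw [Phi, Finset.card_biUnion (Phi_pieces_disjoint p)]
  refine Finset.sum_congr rfl fun e _ => ?_
  by_cases h : p e.1 e.2 = e.1.1
  · simp [h]
  · rw [if_neg h, if_neg h, card_gammaPath h]

lemma isEulerian_Phi {p : (e : V × V) → e ∈ A → V}
    (hbal : ∀ v, (A.attach.filter fun e => p e.1 e.2 = v).card = outDeg A v) :
    IsEulerian (Phi A p) := by
  intro w
  rw [Phi, outDeg_biUnion _ _ (Phi_pieces_disjoint p), inDeg_biUnion _ _ (Phi_pieces_disjoint p)]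
  have key : ∀ e ∈ A.attach,
      outDeg (if p e.1 e.2 = e.1.1 then (∅ : Finset (WV V × WV V)) else gammaPath A e.1 (p e.1 e.2)) w
        + (if p e.1 e.2 ≠ e.1.1 ∧ vstar (p e.1 e.2) = w then 1 else 0)
      = inDeg (if p e.1 e.2 = e.1.1 then ∅ else gammaPath A e.1 (p e.1 e.2)) w
        + (if p e.1 e.2 ≠ e.1.1 ∧ vstar e.1.1 = w then 1 else 0) := by
    intro e _
    by_cases h : p e.1 e.2 = e.1.1
    · simp [h, outDeg, inDeg]
    · rw [if_neg h]
      have := deg_path_balance (A := A) (e := e.1) (x := p e.1 e.2) h w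
      simpa [h] using this
  have hsum := Finset.sum_congr rfl key
  rw [Finset.sum_add_distrib, Finset.sum_add_distrib] at hsum
  have hind : (∑ e ∈ A.attach, if p e.1 e.2 ≠ e.1.1 ∧ vstar (p e.1 e.2) = w then 1 else 0)
      = ∑ e ∈ A.attach, if p e.1 e.2 ≠ e.1.1 ∧ vstar e.1.1 = w then 1 else 0 := by
    rcases w with v | q | q
    · -- w = vstar v
      have hv1 : ∀ u : V, (vstar u : WV V) = vstar v ↔ u = v := by
        intro u; simp [vstar]
      simp only [vstar] at hv1 ⊢
      show (∑ e ∈ A.attach, if p e.1 e.2 ≠ e.1.1 ∧ Sum.inl (p e.1 e.2) = (Sum.inl v : WV V) then 1 else 0)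
        = ∑ e ∈ A.attach, if p e.1 e.2 ≠ e.1.1 ∧ Sum.inl e.1.1 = (Sum.inl v : WV V) then 1 else 0
      rw [← Finset.card_filter, ← Finset.card_filter]
      -- counting argument
      have hsrc : (A.attach.filter fun e => e.1.1 = v).card = outDeg A v := by
        rw [Finset.filter_attach (fun z : V × V => z.1 = v) A, Finset.card_map,
          Finset.card_attach, outDeg]
      have h1 : (A.attach.filter fun e => p e.1 e.2 = v ∧ p e.1 e.2 = e.1.1).card
          = (A.attach.filter fun e => e.1.1 = v ∧ p e.1 e.2 = e.1.1).card := by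
        congr 1
        apply Finset.filter_congr
        intro e _
        constructor
        · rintro ⟨h1, h2⟩; exact ⟨h2 ▸ h1, h2⟩
        · rintro ⟨h1, h2⟩; exact ⟨h2.trans h1, h2⟩
      have h2 : (A.attach.filter fun e => p e.1 e.2 = v ∧ p e.1 e.2 = e.1.1).card
            + (A.attach.filter fun e => p e.1 e.2 = v ∧ ¬p e.1 e.2 = e.1.1).card
          = (A.attach.filter fun e => p e.1 e.2 = v).card := by
        have := Finset.card_filter_add_card_filter_not
          (s := A.attach.filter fun e => p e.1 e.2 = v) (p := fun e => p e.1 e.2 = e.1.1)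
        rwa [Finset.filter_filter, Finset.filter_filter] at this
      have h3 : (A.attach.filter fun e => e.1.1 = v ∧ p e.1 e.2 = e.1.1).card
            + (A.attach.filter fun e => e.1.1 = v ∧ ¬p e.1 e.2 = e.1.1).card
          = (A.attach.filter fun e => e.1.1 = v).card := by
        have := Finset.card_filter_add_card_filter_not
          (s := A.attach.filter fun e => e.1.1 = v) (p := fun e => p e.1 e.2 = e.1.1)
        rwa [Finset.filter_filter, Finset.filter_filter] at this
      have h4 : (A.attach.filter fun e => ¬p e.1 e.2 = e.1.1 ∧ Sum.inl (p e.1 e.2) = (Sum.inl v : WV V)).card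
          = (A.attach.filter fun e => p e.1 e.2 = v ∧ ¬p e.1 e.2 = e.1.1).card := by
        congr 1
        apply Finset.filter_congr
        intro e _
        simp [and_comm]
      have h5 : (A.attach.filter fun e => ¬p e.1 e.2 = e.1.1 ∧ Sum.inl e.1.1 = (Sum.inl v : WV V)).card
          = (A.attach.filter fun e => e.1.1 = v ∧ ¬p e.1 e.2 = e.1.1).card := by
        congr 1
        apply Finset.filter_congr
        intro e _
        simp [and_comm]
      rw [h4, h5]
      have := hbal v
      omega
    · simp [vstar]
    · simp [vstar]
  omega

end AuxPhi
section AuxBij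
set_option linter.unusedSectionVars false
variable {V : Type*} [Fintype V] [DecidableEq V]
variable {A : Finset (V × V)} {e e' : V × V} {x y v : V} {a : WV V × WV V}

lemma Phi_subset (hs : ∀ v, (v, v) ∉ A) {p : (e : V × V) → e ∈ A → V}
    (hp : ∀ (e : V × V) (he : e ∈ A), p e he ∈ Tset A e) : Phi A p ⊆ WArcSet A := by
  intro a ha
  rw [mem_Phi] at ha
  obtain ⟨e, hne, hpath⟩ := ha
  exact gammaPath_subset hs e.2 (hp e.1 e.2) hne hpath

lemma sign_Phi (hs : ∀ v, (v, v) ∉ A) {p : (e : V × V) → e ∈ A → V}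
    (hp : ∀ (e : V × V) (he : e ∈ A), p e he ∈ Tset A e) :
    ∏ e ∈ A.attach, sgn A e.1 (p e.1 e.2) = (-1 : ℝ) ^ (Phi A p).card := by
  rw [card_Phi, ← Finset.prod_pow_eq_pow_sum]
  refine Finset.prod_congr rfl fun e _ => ?_
  by_cases h : p e.1 e.2 = e.1.1
  · rw [if_pos h, pow_zero, sgn, if_neg]
    rw [h]
    exact src_not_mem_Mset hs
  · rw [if_neg h]
    by_cases hmid : p e.1 e.2 ∈ MidSet A e.1
    · rw [if_pos hmid, sgn, if_neg (MidSet_disj_Mset hmid)]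
      norm_num
    · rw [if_neg hmid, sgn, if_pos (mem_Mset_of_not_mid (hp e.1 e.2) h hmid)]
      norm_num

lemma arc5_self_mem_gammaPath : arc5 e x ∈ gammaPath A e x := by
  by_cases hmid : x ∈ MidSet A e
  · rw [gammaPath_mid hmid]; simp
  · rw [gammaPath_not_mid hmid]; simp

lemma arc5_mem_Phi_iff {p : (e : V × V) → e ∈ A → V} (he : e ∈ A) :
    arc5 e x ∈ Phi A p ↔ p e he ≠ e.1 ∧ p e he = x := by
  constructor
  · intro h
    rw [mem_Phi] at h
    obtain ⟨⟨e', he'⟩, hne', hpath⟩ := h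
    obtain ⟨h1, h2⟩ := arc5_mem_gammaPath hpath
    simp only at h1 h2 hne'
    subst h1
    exact ⟨hne', h2⟩
  · rintro ⟨hne, hx⟩
    rw [mem_Phi]
    exact ⟨⟨e, he⟩, hne, hx ▸ arc5_self_mem_gammaPath⟩

lemma Phi_injective {p p' : (e : V × V) → e ∈ A → V}
    (h : Phi A p = Phi A p') (e : V × V) (he : e ∈ A) : p e he = p' e he := by
  by_contra hne
  by_cases h1 : p e he = e.1
  · have h2 : p' e he ≠ e.1 := fun hc => hne (h1.trans hc.symm)
    have hm : arc5 e (p' e he) ∈ Phi A p' := (arc5_mem_Phi_iff he).2 ⟨h2, rfl⟩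
    rw [← h] at hm
    exact hne ((arc5_mem_Phi_iff he).1 hm).2
  · have : arc5 e (p e he) ∈ Phi A p := (arc5_mem_Phi_iff he).2 ⟨h1, rfl⟩
    rw [h] at this
    exact hne (((arc5_mem_Phi_iff he).1 this).2.symm)

/-- Reduction of the RHS. -/
lemma rhs_eq {α : Type*} [Fintype α] [DecidableEq α] (H : Finset (α × α)) :
    (EE H : ℝ) - EO H
      = ∑ S ∈ H.powerset.filter (fun S => IsEulerian S), (-1 : ℝ) ^ S.card := by
  classical
  rw [← Finset.sum_filter_add_sum_filter_not (H.powerset.filter fun S => IsEulerian S)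
    (fun S => Even S.card), Finset.filter_filter, Finset.filter_filter]
  have h1 : ∀ S ∈ H.powerset.filter fun S => IsEulerian S ∧ Even S.card,
      (-1 : ℝ) ^ S.card = 1 := fun S hS => (Finset.mem_filter.1 hS).2.2.neg_one_pow
  have h2 : ∀ S ∈ H.powerset.filter fun S => IsEulerian S ∧ ¬Even S.card,
      (-1 : ℝ) ^ S.card = -1 := fun S hS =>
    (Nat.not_even_iff_odd.1 (Finset.mem_filter.1 hS).2.2).neg_one_pow
  rw [Finset.sum_congr rfl h1, Finset.sum_congr rfl h2, Finset.sum_const, Finset.sum_const]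
  have h3 : (H.powerset.filter fun S => IsEulerian S ∧ ¬Even S.card)
      = H.powerset.filter fun S => IsEulerian S ∧ Odd S.card := by
    apply Finset.filter_congr
    intro S _
    rw [← Nat.not_even_iff_odd]
  rw [h3, EE, EO]
  simp
  ring

lemma prodX_eq_monomial {ι : Type*} (s : Finset ι) (f : ι → V) :
    (∏ i ∈ s, (X (f i) : MvPolynomial V ℝ)) =
      monomial (∑ i ∈ s, Finsupp.single (f i) 1) 1 := by
  classical
  induction s using Finset.induction with
  | empty => simp [monomial_zero']
  | insert b s ha ih =>
    rw [Finset.prod_insert ha, Finset.sum_insert ha, ih, X, monomial_mul, one_mul]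

/-- Reduction of the LHS. -/
lemma lhs_eq (A : Finset (V × V)) (m : V →₀ ℕ) :
    (∏ e ∈ A,
        ((∑ u ∈ nbr A e.2 \ nbr A e.1, MvPolynomial.X u)
          - ∑ u ∈ nbr A e.1 \ nbr A e.2, MvPolynomial.X u : MvPolynomial V ℝ)).coeff m
    = ∑ p ∈ A.pi (Tset A),
        if (∑ e ∈ A.attach, Finsupp.single (p e.1 e.2) 1) = m then
          ∏ e ∈ A.attach, sgn A e.1 (p e.1 e.2) else 0 := by
  classical
  have hfac : ∀ e ∈ A,
      ((∑ u ∈ nbr A e.2 \ nbr A e.1, MvPolynomial.X u)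
          - ∑ u ∈ nbr A e.1 \ nbr A e.2, MvPolynomial.X u : MvPolynomial V ℝ)
      = ∑ u ∈ Tset A e, C (sgn A e u) * X u := by
    intro e _
    rw [Tset, Finset.sum_union]
    · have h1 : ∀ u ∈ Pset A e, C (sgn A e u) * X u = (X u : MvPolynomial V ℝ) := by
        intro u hu
        have : u ∉ Mset A e := by
          simp only [Mset, Pset, Finset.mem_sdiff] at hu ⊢
          tauto
        simp [sgn, this]
      have h2 : ∀ u ∈ Mset A e, C (sgn A e u) * X u = -(X u : MvPolynomial V ℝ) := by
        intro u hu
        simp [sgn, hu]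
      rw [Finset.sum_congr rfl h1, Finset.sum_congr rfl h2, Finset.sum_neg_distrib]
      rw [Pset, Mset]
      ring
    · simp only [Finset.disjoint_left, Mset, Pset, Finset.mem_sdiff]
      tauto
  rw [Finset.prod_congr rfl hfac, Finset.prod_sum, MvPolynomial.coeff_sum]
  refine Finset.sum_congr rfl fun p hp => ?_
  rw [Finset.prod_mul_distrib, ← map_prod, coeff_C_mul, prodX_eq_monomial, coeff_monomial]
  split <;> simp

lemma cond_iff {p : (e : V × V) → e ∈ A → V} :
    (∑ e ∈ A.attach, Finsupp.single (p e.1 e.2) 1)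
        = (Finsupp.equivFunOnFinite.symm fun v => outDeg A v)
      ↔ ∀ v, (A.attach.filter fun e => p e.1 e.2 = v).card = outDeg A v := by
  rw [Finsupp.ext_iff]
  apply forall_congr'
  intro v
  rw [Finset.sum_apply']
  simp only [Finsupp.single_apply, Finsupp.equivFunOnFinite_symm_apply_apply]
  rw [← Finset.card_filter]

end AuxBij
section AuxShape
set_option linter.unusedSectionVars false
variable {V : Type*} [Fintype V] [DecidableEq V]
variable {A : Finset (V × V)} {S : Finset (WV V × WV V)} {e e' : V × V} {x y v : V}
  {a b : WV V × WV V} {w : WV V}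

@[simp] lemma vstar_inj : (vstar x : WV V) = vstar y ↔ x = y := by simp [vstar]
@[simp] lemma vsec_inj : (vsec e x : WV V) = vsec e' y ↔ e = e' ∧ x = y := by simp [vsec]
@[simp] lemma vmid_inj : (vmid e x : WV V) = vmid e' y ↔ e = e' ∧ x = y := by simp [vmid]
@[simp] lemma vstar_ne_vsec : (vstar x : WV V) ≠ vsec e y := by simp [vstar, vsec]
@[simp] lemma vstar_ne_vmid : (vstar x : WV V) ≠ vmid e y := by simp [vstar, vmid]
@[simp] lemma vsec_ne_vstar : (vsec e y : WV V) ≠ vstar x := by simp [vstar, vsec]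
@[simp] lemma vmid_ne_vstar : (vmid e y : WV V) ≠ vstar x := by simp [vstar, vmid]
@[simp] lemma vsec_ne_vmid : (vsec e x : WV V) ≠ vmid e' y := by simp [vsec, vmid]
@[simp] lemma vmid_ne_vsec : (vmid e x : WV V) ≠ vsec e' y := by simp [vsec, vmid]

/-- L1: the only possible in-arc of `vsec e e.1`. -/
lemma eq_arc1_of_snd (hs : ∀ v, (v, v) ∉ A) (hsub : S ⊆ WArcSet A) (ha : a ∈ S)
    (h2 : a.2 = vsec e e.1) : a = arc1 e := by
  rcases mem_WArcSet_elim (hsub ha) with ⟨e'', he'', rfl⟩ | ⟨e'', he'', z, hz, rfl⟩ |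
    ⟨e'', he'', z, hz, rfl⟩ | ⟨e'', he'', z, hz, rfl⟩ | ⟨e'', he'', z, hz, rfl⟩
  · simp only [arc1, vsec_inj] at h2
    obtain ⟨rfl, -⟩ := h2
    rfl
  · simp only [arc2, vsec_inj] at h2
    obtain ⟨rfl, rfl⟩ := h2
    exact absurd (Finset.mem_sdiff.1 hz).1 (not_mem_nbr_self hs _)
  · simp only [arc3] at h2
    exact absurd h2 (vmid_ne_vsec)
  · simp only [arc4, vsec_inj] at h2
    obtain ⟨rfl, rfl⟩ := h2
    exact absurd rfl (mid_ne_src hz)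
  · simp only [arc5] at h2
    exact absurd h2 (vstar_ne_vsec)

/-- L2: out-arcs of `vsec e e.1`. -/
lemma out_arc_shape (hs : ∀ v, (v, v) ∉ A) (hsub : S ⊆ WArcSet A) (ha : a ∈ S)
    (h2 : a.1 = vsec e e.1) :
    (∃ z ∈ Mset A e, a = arc2 e z) ∨ (∃ z ∈ MidSet A e, a = arc3 e z) := by
  rcases mem_WArcSet_elim (hsub ha) with ⟨e'', he'', rfl⟩ | ⟨e'', he'', z, hz, rfl⟩ |
    ⟨e'', he'', z, hz, rfl⟩ | ⟨e'', he'', z, hz, rfl⟩ | ⟨e'', he'', z, hz, rfl⟩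
  · exact absurd h2 (by simp [arc1])
  · simp only [arc2, vsec_inj] at h2
    obtain ⟨rfl, -⟩ := h2
    exact Or.inl ⟨z, hz, rfl⟩
  · simp only [arc3, vsec_inj] at h2
    obtain ⟨rfl, -⟩ := h2
    exact Or.inr ⟨z, hz, rfl⟩
  · exact absurd h2 (by simp [arc4])
  · simp only [arc5, vsec_inj] at h2
    obtain ⟨rfl, rfl⟩ := h2
    exact absurd rfl ((mem_gammaEnds_iff hs he'').1 hz).2

/-- L3: in-arcs of `vmid e x`. -/
lemma in_arc_vmid (hsub : S ⊆ WArcSet A) (ha : a ∈ S) (h2 : a.2 = vmid e x) :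
    a = arc3 e x ∧ x ∈ MidSet A e := by
  rcases mem_WArcSet_elim (hsub ha) with ⟨e'', he'', rfl⟩ | ⟨e'', he'', z, hz, rfl⟩ |
    ⟨e'', he'', z, hz, rfl⟩ | ⟨e'', he'', z, hz, rfl⟩ | ⟨e'', he'', z, hz, rfl⟩
  · exact absurd h2 (by simp [arc1])
  · exact absurd h2 (by simp [arc2])
  · simp only [arc3, vmid_inj] at h2
    obtain ⟨rfl, rfl⟩ := h2
    exact ⟨rfl, hz⟩
  · exact absurd h2 (by simp [arc4])
  · exact absurd h2 (by simp [arc5])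

/-- L4: out-arcs of `vmid e x`. -/
lemma out_arc_vmid (hsub : S ⊆ WArcSet A) (ha : a ∈ S) (h2 : a.1 = vmid e x) :
    a = arc4 e x ∧ x ∈ MidSet A e := by
  rcases mem_WArcSet_elim (hsub ha) with ⟨e'', he'', rfl⟩ | ⟨e'', he'', z, hz, rfl⟩ |
    ⟨e'', he'', z, hz, rfl⟩ | ⟨e'', he'', z, hz, rfl⟩ | ⟨e'', he'', z, hz, rfl⟩
  · exact absurd h2 (by simp [arc1])
  · exact absurd h2 (by simp [arc2])
  · exact absurd h2 (by simp [arc3])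
  · simp only [arc4, vmid_inj] at h2
    obtain ⟨rfl, rfl⟩ := h2
    exact ⟨rfl, hz⟩
  · exact absurd h2 (by simp [arc5])

/-- L5: in-arcs of `vsec e x` for `x ≠ e.1`. -/
lemma in_arc_vsec (hsub : S ⊆ WArcSet A) (hne : x ≠ e.1) (ha : a ∈ S) (h2 : a.2 = vsec e x) :
    (a = arc2 e x ∧ x ∈ Mset A e) ∨ (a = arc4 e x ∧ x ∈ MidSet A e) := by
  rcases mem_WArcSet_elim (hsub ha) with ⟨e'', he'', rfl⟩ | ⟨e'', he'', z, hz, rfl⟩ |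
    ⟨e'', he'', z, hz, rfl⟩ | ⟨e'', he'', z, hz, rfl⟩ | ⟨e'', he'', z, hz, rfl⟩
  · simp only [arc1, vsec_inj] at h2
    obtain ⟨rfl, h3⟩ := h2
    exact absurd h3.symm hne
  · simp only [arc2, vsec_inj] at h2
    obtain ⟨rfl, rfl⟩ := h2
    exact Or.inl ⟨rfl, hz⟩
  · exact absurd h2 (by simp [arc3])
  · simp only [arc4, vsec_inj] at h2
    obtain ⟨rfl, rfl⟩ := h2
    exact Or.inr ⟨rfl, hz⟩
  · exact absurd h2 (by simp [arc5])

/-- L6: out-arcs of `vsec e x` for `x ≠ e.1`. -/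
lemma out_arc_vsec (hsub : S ⊆ WArcSet A) (hne : x ≠ e.1) (ha : a ∈ S) (h2 : a.1 = vsec e x) :
    a = arc5 e x := by
  rcases mem_WArcSet_elim (hsub ha) with ⟨e'', he'', rfl⟩ | ⟨e'', he'', z, hz, rfl⟩ |
    ⟨e'', he'', z, hz, rfl⟩ | ⟨e'', he'', z, hz, rfl⟩ | ⟨e'', he'', z, hz, rfl⟩
  · exact absurd h2 (by simp [arc1])
  · simp only [arc2, vsec_inj] at h2
    obtain ⟨rfl, h3⟩ := h2
    exact absurd h3.symm hne
  · simp only [arc3, vsec_inj] at h2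
    obtain ⟨rfl, h3⟩ := h2
    exact absurd h3.symm hne
  · exact absurd h2 (by simp [arc4])
  · simp only [arc5, vsec_inj] at h2
    obtain ⟨rfl, rfl⟩ := h2
    rfl

end AuxShape
section AuxSector
set_option linter.unusedSectionVars false
variable {V : Type*} [Fintype V] [DecidableEq V]
variable {A : Finset (V × V)} {S : Finset (WV V × WV V)} {e e' : V × V} {x y v : V}
  {a b : WV V × WV V} {w : WV V}

lemma exists_in_arc (hE : IsEulerian S) (hb : b ∈ S) (hw : b.1 = w) : ∃ c ∈ S, c.2 = w := by
  have h1 : 0 < outDeg S w := Finset.card_pos.2 ⟨b, Finset.mem_filter.2 ⟨hb, hw⟩⟩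
  have h2 : 0 < inDeg S w := by rw [← hE w]; exact h1
  obtain ⟨c, hc⟩ := Finset.card_pos.1 h2
  exact ⟨c, (Finset.mem_filter.1 hc).1, (Finset.mem_filter.1 hc).2⟩

lemma exists_out_arc (hE : IsEulerian S) (hb : b ∈ S) (hw : b.2 = w) : ∃ c ∈ S, c.1 = w := by
  have h1 : 0 < inDeg S w := Finset.card_pos.2 ⟨b, Finset.mem_filter.2 ⟨hb, hw⟩⟩
  have h2 : 0 < outDeg S w := by rw [hE w]; exact h1
  obtain ⟨c, hc⟩ := Finset.card_pos.1 h2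
  exact ⟨c, (Finset.mem_filter.1 hc).1, (Finset.mem_filter.1 hc).2⟩

lemma arc3_to_arc4 (hsub : S ⊆ WArcSet A) (hE : IsEulerian S) (h : arc3 e x ∈ S) :
    arc4 e x ∈ S := by
  obtain ⟨c, hc, hc2⟩ := exists_out_arc hE h (show (arc3 e x).2 = vmid e x from rfl)
  obtain ⟨h4, -⟩ := out_arc_vmid hsub hc hc2
  exact h4 ▸ hc

lemma arc4_to_arc3 (hsub : S ⊆ WArcSet A) (hE : IsEulerian S) (h : arc4 e x ∈ S) :
    arc3 e x ∈ S := by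
  obtain ⟨c, hc, hc2⟩ := exists_in_arc hE h (show (arc4 e x).1 = vmid e x from rfl)
  obtain ⟨h4, -⟩ := in_arc_vmid hsub hc hc2
  exact h4 ▸ hc

lemma in_to_arc5 (hsub : S ⊆ WArcSet A) (hE : IsEulerian S) (hne : x ≠ e.1) (hb : b ∈ S)
    (hw : b.2 = vsec e x) : arc5 e x ∈ S := by
  obtain ⟨c, hc, hc2⟩ := exists_out_arc hE hb hw
  exact out_arc_vsec hsub hne hc hc2 ▸ hc

lemma arc5_to_in (hsub : S ⊆ WArcSet A) (hE : IsEulerian S) (hne : x ≠ e.1)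
    (h : arc5 e x ∈ S) : arc2 e x ∈ S ∨ arc4 e x ∈ S := by
  obtain ⟨c, hc, hc2⟩ := exists_in_arc hE h (show (arc5 e x).1 = vsec e x from rfl)
  rcases in_arc_vsec hsub hne hc hc2 with ⟨h4, -⟩ | ⟨h4, -⟩
  · exact Or.inl (h4 ▸ hc)
  · exact Or.inr (h4 ▸ hc)

lemma arc2_eq_arc2 {z : V} (h : arc2 e z = arc2 e' x) : e = e' ∧ z = x := by
  simp only [arc2, Prod.mk.injEq, vsec_inj] at h
  exact ⟨h.1.1, h.2.2⟩

lemma arc3_eq_arc3 {z : V} (h : arc3 e z = arc3 e' x) : e = e' ∧ z = x := by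
  simp only [arc3, Prod.mk.injEq, vsec_inj, vmid_inj] at h
  exact ⟨h.1.1, h.2.2⟩

lemma arc2_ne_arc3 {z : V} : arc2 e z ≠ arc3 e' x := by
  simp [arc2, arc3, Prod.ext_iff]

/-- The sector of `e` in `S` is empty when the initial arc is missing. -/
lemma sector_empty (hs : ∀ v, (v, v) ∉ A) (hsub : S ⊆ WArcSet A) (hE : IsEulerian S)
    (he : e ∈ A) (h1 : arc1 e ∉ S) : ∀ a ∈ S, secOf a ≠ some e := by
  have hin : inDeg S (vsec e e.1) = 0 := by
    rw [inDeg, Finset.card_eq_zero, Finset.filter_eq_empty_iff]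
    intro b hb hb2
    exact h1 (eq_arc1_of_snd hs hsub hb hb2 ▸ hb)
  have hout : ∀ b ∈ S, b.1 ≠ vsec e e.1 := by
    have h2 : outDeg S (vsec e e.1) = 0 := (hE _).trans hin
    rw [outDeg, Finset.card_eq_zero, Finset.filter_eq_empty_iff] at h2
    exact h2
  intro a haS hsec
  rcases mem_WArcSet_elim (hsub haS) with ⟨e'', he'', rfl⟩ | ⟨e'', he'', z, hz, rfl⟩ |
    ⟨e'', he'', z, hz, rfl⟩ | ⟨e'', he'', z, hz, rfl⟩ | ⟨e'', he'', z, hz, rfl⟩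
  · rw [secOf_arc1, Option.some_inj] at hsec
    subst hsec
    exact h1 haS
  · rw [secOf_arc2, Option.some_inj] at hsec
    subst hsec
    exact hout _ haS rfl
  · rw [secOf_arc3, Option.some_inj] at hsec
    subst hsec
    exact hout _ haS rfl
  · rw [secOf_arc4, Option.some_inj] at hsec
    subst hsec
    exact hout _ (arc4_to_arc3 hsub hE haS) rfl
  · rw [secOf_arc5, Option.some_inj] at hsec
    subst hsec
    have hz2 := ((mem_gammaEnds_iff hs he).1 hz).2
    rcases arc5_to_in hsub hE hz2 haS with h | h
    · exact hout _ h rfl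
    · exact hout _ (arc4_to_arc3 hsub hE h) rfl

/-- The sector of `e` in `S` is a γ-path when the initial arc is present. -/
lemma sector_path (hs : ∀ v, (v, v) ∉ A) (hsub : S ⊆ WArcSet A) (hE : IsEulerian S)
    (he : e ∈ A) (h1 : arc1 e ∈ S) :
    ∃ x, x ∈ Tset A e ∧ x ≠ e.1 ∧
      S.filter (fun a => secOf a = some e) = gammaPath A e x := by
  have hfil : S.filter (fun a => a.2 = vsec e e.1) = {arc1 e} := by
    apply Finset.Subset.antisymm
    · intro b hb
      rw [Finset.mem_filter] at hb
      rw [Finset.mem_singleton]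
      exact eq_arc1_of_snd hs hsub hb.1 hb.2
    · intro b hb
      rw [Finset.mem_singleton] at hb
      subst hb
      exact Finset.mem_filter.2 ⟨h1, rfl⟩
  have hout1 : outDeg S (vsec e e.1) = 1 := by
    rw [hE (vsec e e.1), inDeg, hfil, Finset.card_singleton]
  obtain ⟨a0, ha0⟩ := Finset.card_eq_one.1 hout1
  have ha0mem : a0 ∈ S ∧ a0.1 = vsec e e.1 := by
    have h2 : a0 ∈ S.filter (fun a => a.1 = vsec e e.1) := by
      rw [outDeg] at hout1
      rw [ha0]
      exact Finset.mem_singleton_self a0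
    exact ⟨(Finset.mem_filter.1 h2).1, (Finset.mem_filter.1 h2).2⟩
  have huniq : ∀ b ∈ S, b.1 = vsec e e.1 → b = a0 := by
    intro b hb hb1
    have h2 : b ∈ S.filter (fun a => a.1 = vsec e e.1) := Finset.mem_filter.2 ⟨hb, hb1⟩
    rw [ha0] at h2
    exact Finset.mem_singleton.1 h2
  rcases out_arc_shape hs hsub ha0mem.1 ha0mem.2 with ⟨x, hx, hxeq⟩ | ⟨x, hx, hxeq⟩
  · -- the path goes directly: a0 = arc2 e x
    subst hxeq
    have ha2S : arc2 e x ∈ S := ha0mem.1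
    have hne : x ≠ e.1 := mset_ne_src hs hx
    have h5 : arc5 e x ∈ S := in_to_arc5 hsub hE hne ha2S rfl
    have hmid : x ∉ MidSet A e := fun hm => MidSet_disj_Mset hm hx
    refine ⟨x, Finset.mem_union.2 (Or.inr hx), hne, ?_⟩
    rw [gammaPath_not_mid hmid]
    apply Finset.Subset.antisymm
    · intro b hb
      rw [Finset.mem_filter] at hb
      obtain ⟨hbS, hbsec⟩ := hb
      rcases mem_WArcSet_elim (hsub hbS) with ⟨e'', he'', rfl⟩ | ⟨e'', he'', z, hz, rfl⟩ |
        ⟨e'', he'', z, hz, rfl⟩ | ⟨e'', he'', z, hz, rfl⟩ | ⟨e'', he'', z, hz, rfl⟩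
      · rw [secOf_arc1, Option.some_inj] at hbsec
        subst hbsec
        simp
      · rw [secOf_arc2, Option.some_inj] at hbsec
        subst hbsec
        obtain ⟨-, rfl⟩ := arc2_eq_arc2 (huniq _ hbS rfl)
        simp
      · rw [secOf_arc3, Option.some_inj] at hbsec
        subst hbsec
        exact absurd (huniq _ hbS rfl) (arc2_ne_arc3 ∘ Eq.symm)
      · rw [secOf_arc4, Option.some_inj] at hbsec
        subst hbsec
        exact absurd (huniq _ (arc4_to_arc3 hsub hE hbS) rfl) (arc2_ne_arc3 ∘ Eq.symm)
      · rw [secOf_arc5, Option.some_inj] at hbsec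
        subst hbsec
        have hz2 := ((mem_gammaEnds_iff hs he).1 hz).2
        rcases arc5_to_in hsub hE hz2 hbS with h6 | h6
        · obtain ⟨-, rfl⟩ := arc2_eq_arc2 (huniq _ h6 rfl)
          simp
        · exact absurd (huniq _ (arc4_to_arc3 hsub hE h6) rfl) (arc2_ne_arc3 ∘ Eq.symm)
    · intro b hb
      simp only [Finset.mem_insert, Finset.mem_singleton] at hb
      rcases hb with rfl | rfl | rfl
      · exact Finset.mem_filter.2 ⟨h1, secOf_arc1⟩
      · exact Finset.mem_filter.2 ⟨ha2S, secOf_arc2⟩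
      · exact Finset.mem_filter.2 ⟨h5, secOf_arc5⟩
  · -- the path goes through a middle vertex: a0 = arc3 e x
    subst hxeq
    have ha3S : arc3 e x ∈ S := ha0mem.1
    have hne : x ≠ e.1 := mid_ne_src hx
    have h4 : arc4 e x ∈ S := arc3_to_arc4 hsub hE ha3S
    have h5 : arc5 e x ∈ S := in_to_arc5 hsub hE hne h4 rfl
    refine ⟨x, Finset.mem_union.2 (Or.inl (mem_MidSet_iff.1 hx).1), hne, ?_⟩
    rw [gammaPath_mid hx]
    apply Finset.Subset.antisymm
    · intro b hb
      rw [Finset.mem_filter] at hb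
      obtain ⟨hbS, hbsec⟩ := hb
      rcases mem_WArcSet_elim (hsub hbS) with ⟨e'', he'', rfl⟩ | ⟨e'', he'', z, hz, rfl⟩ |
        ⟨e'', he'', z, hz, rfl⟩ | ⟨e'', he'', z, hz, rfl⟩ | ⟨e'', he'', z, hz, rfl⟩
      · rw [secOf_arc1, Option.some_inj] at hbsec
        subst hbsec
        simp
      · rw [secOf_arc2, Option.some_inj] at hbsec
        subst hbsec
        exact absurd (huniq _ hbS rfl) arc2_ne_arc3
      · rw [secOf_arc3, Option.some_inj] at hbsec
        subst hbsec
        obtain ⟨-, rfl⟩ := arc3_eq_arc3 (huniq _ hbS rfl)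
        simp
      · rw [secOf_arc4, Option.some_inj] at hbsec
        subst hbsec
        obtain ⟨-, rfl⟩ := arc3_eq_arc3 (huniq _ (arc4_to_arc3 hsub hE hbS) rfl)
        simp
      · rw [secOf_arc5, Option.some_inj] at hbsec
        subst hbsec
        have hz2 := ((mem_gammaEnds_iff hs he).1 hz).2
        rcases arc5_to_in hsub hE hz2 hbS with h6 | h6
        · exact absurd (huniq _ h6 rfl) arc2_ne_arc3
        · obtain ⟨-, rfl⟩ := arc3_eq_arc3 (huniq _ (arc4_to_arc3 hsub hE h6) rfl)
          simp
    · intro b hb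
      simp only [Finset.mem_insert, Finset.mem_singleton] at hb
      rcases hb with rfl | rfl | rfl | rfl
      · exact Finset.mem_filter.2 ⟨h1, secOf_arc1⟩
      · exact Finset.mem_filter.2 ⟨ha3S, secOf_arc3⟩
      · exact Finset.mem_filter.2 ⟨h4, secOf_arc4⟩
      · exact Finset.mem_filter.2 ⟨h5, secOf_arc5⟩

end AuxSector
section AuxFinal
set_option linter.unusedSectionVars false
variable {V : Type*} [Fintype V] [DecidableEq V]
variable {A : Finset (V × V)} {S : Finset (WV V × WV V)} {e e' : V × V} {x y v : V}
  {a b : WV V × WV V} {w : WV V}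

lemma secOf_mem (hsub : S ⊆ WArcSet A) (ha : a ∈ S) : ∃ e ∈ A, secOf a = some e := by
  rcases mem_WArcSet_elim (hsub ha) with ⟨e'', he'', rfl⟩ | ⟨e'', he'', z, hz, rfl⟩ |
    ⟨e'', he'', z, hz, rfl⟩ | ⟨e'', he'', z, hz, rfl⟩ | ⟨e'', he'', z, hz, rfl⟩ <;>
    exact ⟨e'', he'', by simp⟩

lemma exists_p (hs : ∀ v, (v, v) ∉ A) (hsub : S ⊆ WArcSet A) (hE : IsEulerian S) :
    ∃ p : (e : V × V) → e ∈ A → V,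
      (∀ (e : V × V) (he : e ∈ A), p e he ∈ Tset A e) ∧ Phi A p = S := by
  classical
  have key : ∀ e : {z // z ∈ A}, ∃ x : V,
      (arc1 e.1 ∈ S → x ∈ Tset A e.1 ∧ x ≠ e.1.1 ∧
        S.filter (fun a => secOf a = some e.1) = gammaPath A e.1 x) ∧
      (arc1 e.1 ∉ S → x = e.1.1) := by
    intro e
    by_cases h : arc1 e.1 ∈ S
    · obtain ⟨x, hx⟩ := sector_path hs hsub hE e.2 h
      exact ⟨x, fun _ => hx, fun hc => absurd h hc⟩
    · exact ⟨e.1.1, fun hc => absurd hc h, fun _ => rfl⟩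
  choose q hq1 hq2 using key
  refine ⟨fun e he => q ⟨e, he⟩, ?_, ?_⟩
  · intro e he
    show q ⟨e, he⟩ ∈ Tset A e
    by_cases h : arc1 e ∈ S
    · exact (hq1 ⟨e, he⟩ h).1
    · rw [hq2 ⟨e, he⟩ h]
      exact Finset.mem_union.2 (Or.inl (src_mem_Pset hs he))
  · ext a
    rw [mem_Phi]
    constructor
    · rintro ⟨e, hne, hpath⟩
      have h : arc1 e.1 ∈ S := by
        by_contra hc
        exact hne (hq2 e hc)
      have h2 := (hq1 e h).2.2
      rw [← h2] at hpath
      exact (Finset.mem_filter.1 hpath).1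
    · intro haS
      obtain ⟨e, he, hsec⟩ := secOf_mem hsub haS
      have h : arc1 e ∈ S := by
        by_contra hc
        exact sector_empty hs hsub hE he hc a haS hsec
      refine ⟨⟨e, he⟩, (hq1 ⟨e, he⟩ h).2.1, ?_⟩
      rw [← (hq1 ⟨e, he⟩ h).2.2]
      exact Finset.mem_filter.2 ⟨haS, hsec⟩

lemma outDeg_gammaPath_vstar (hne : x ≠ e.1) (v : V) :
    outDeg (gammaPath A e x) (vstar v) = if e.1 = v then 1 else 0 := by
  obtain ⟨h1, h2, h3, h4, h5⟩ := path_arcs_distinct hne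
  by_cases hmid : x ∈ MidSet A e
  · rw [gammaPath_mid hmid, outDeg, Finset.card_filter, Finset.sum_insert h1,
      Finset.sum_insert h2, Finset.sum_insert h3, Finset.sum_singleton]
    simp [arc1, arc3, arc4, arc5]
  · rw [gammaPath_not_mid hmid, outDeg, Finset.card_filter, Finset.sum_insert h4,
      Finset.sum_insert h5, Finset.sum_singleton]
    simp [arc1, arc2, arc5]

lemma inDeg_gammaPath_vstar (hne : x ≠ e.1) (v : V) :
    inDeg (gammaPath A e x) (vstar v) = if x = v then 1 else 0 := by
  obtain ⟨h1, h2, h3, h4, h5⟩ := path_arcs_distinct hne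
  by_cases hmid : x ∈ MidSet A e
  · rw [gammaPath_mid hmid, inDeg, Finset.card_filter, Finset.sum_insert h1,
      Finset.sum_insert h2, Finset.sum_insert h3, Finset.sum_singleton]
    simp [arc1, arc3, arc4, arc5]
  · rw [gammaPath_not_mid hmid, inDeg, Finset.card_filter, Finset.sum_insert h4,
      Finset.sum_insert h5, Finset.sum_singleton]
    simp [arc1, arc2, arc5]

lemma outDeg_Phi_vstar (p : (e : V × V) → e ∈ A → V) (v : V) :
    outDeg (Phi A p) (vstar v)
      = (A.attach.filter fun e => p e.1 e.2 ≠ e.1.1 ∧ e.1.1 = v).card := by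
  rw [Phi, outDeg_biUnion _ _ (Phi_pieces_disjoint p), Finset.card_filter]
  refine Finset.sum_congr rfl fun e _ => ?_
  by_cases h : p e.1 e.2 = e.1.1
  · simp [h, outDeg]
  · rw [if_neg h, outDeg_gammaPath_vstar h]
    simp [h]

lemma inDeg_Phi_vstar (p : (e : V × V) → e ∈ A → V) (v : V) :
    inDeg (Phi A p) (vstar v)
      = (A.attach.filter fun e => p e.1 e.2 ≠ e.1.1 ∧ p e.1 e.2 = v).card := by
  rw [Phi, inDeg_biUnion _ _ (Phi_pieces_disjoint p), Finset.card_filter]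
  refine Finset.sum_congr rfl fun e _ => ?_
  by_cases h : p e.1 e.2 = e.1.1
  · simp [h, inDeg]
  · rw [if_neg h, inDeg_gammaPath_vstar h]
    simp [h]

lemma attach_filter_card (v : V) :
    (A.attach.filter fun e => e.1.1 = v).card = outDeg A v := by
  rw [Finset.filter_attach (fun z : V × V => z.1 = v) A, Finset.card_map,
    Finset.card_attach, outDeg]

lemma count_shift (p : (e : V × V) → e ∈ A → V) (v : V) :
    (A.attach.filter fun e => p e.1 e.2 = v).card
      + (A.attach.filter fun e => p e.1 e.2 ≠ e.1.1 ∧ e.1.1 = v).card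
    = (A.attach.filter fun e => e.1.1 = v).card
      + (A.attach.filter fun e => p e.1 e.2 ≠ e.1.1 ∧ p e.1 e.2 = v).card := by
  have h1 : (A.attach.filter fun e => p e.1 e.2 = v ∧ p e.1 e.2 = e.1.1).card
      = (A.attach.filter fun e => e.1.1 = v ∧ p e.1 e.2 = e.1.1).card := by
    congr 1
    apply Finset.filter_congr
    intro e _
    constructor
    · rintro ⟨ha, hb⟩; exact ⟨hb ▸ ha, hb⟩
    · rintro ⟨ha, hb⟩; exact ⟨hb.trans ha, hb⟩
  have h2 : (A.attach.filter fun e => p e.1 e.2 = v ∧ p e.1 e.2 = e.1.1).card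
        + (A.attach.filter fun e => p e.1 e.2 = v ∧ ¬p e.1 e.2 = e.1.1).card
      = (A.attach.filter fun e => p e.1 e.2 = v).card := by
    have := Finset.card_filter_add_card_filter_not
      (s := A.attach.filter fun e => p e.1 e.2 = v) (p := fun e => p e.1 e.2 = e.1.1)
    rwa [Finset.filter_filter, Finset.filter_filter] at this
  have h3 : (A.attach.filter fun e => e.1.1 = v ∧ p e.1 e.2 = e.1.1).card
        + (A.attach.filter fun e => e.1.1 = v ∧ ¬p e.1 e.2 = e.1.1).card
      = (A.attach.filter fun e => e.1.1 = v).card := by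
    have := Finset.card_filter_add_card_filter_not
      (s := A.attach.filter fun e => e.1.1 = v) (p := fun e => p e.1 e.2 = e.1.1)
    rwa [Finset.filter_filter, Finset.filter_filter] at this
  have h4 : (A.attach.filter fun e => p e.1 e.2 ≠ e.1.1 ∧ e.1.1 = v).card
      = (A.attach.filter fun e => e.1.1 = v ∧ ¬p e.1 e.2 = e.1.1).card := by
    congr 1
    apply Finset.filter_congr
    intro e _
    exact and_comm
  have h5 : (A.attach.filter fun e => p e.1 e.2 ≠ e.1.1 ∧ p e.1 e.2 = v).card
      = (A.attach.filter fun e => p e.1 e.2 = v ∧ ¬p e.1 e.2 = e.1.1).card := by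
    congr 1
    apply Finset.filter_congr
    intro e _
    exact and_comm
  omega

lemma balance_of_eulerian {p : (e : V × V) → e ∈ A → V} (hE' : IsEulerian (Phi A p)) :
    ∀ v, (A.attach.filter fun e => p e.1 e.2 = v).card = outDeg A v := by
  intro v
  have h := hE' (vstar v)
  rw [outDeg_Phi_vstar, inDeg_Phi_vstar] at h
  have h2 := count_shift (A := A) p v
  have h3 := attach_filter_card (A := A) v
  omega

end AuxFinal
/-- The coefficient of `∏ x_v^{d⁺(v)}` in
`∏_{(v,w)∈E(D)} (Σ_{u ∈ N(w)\N(v)} x_u − Σ_{u ∈ N(v)\N(w)} x_u)`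
equals `EE(W(D)) − EO(W(D))`. -/
theorem coeff_eq_EE_sub_EO_of_W {V : Type*} [Fintype V] [DecidableEq V]
    (A : Finset (V × V)) (hsimple : ∀ v, (v, v) ∉ A) :
    (∏ e ∈ A,
        ((∑ u ∈ nbr A e.2 \ nbr A e.1, MvPolynomial.X u)
          - ∑ u ∈ nbr A e.1 \ nbr A e.2, MvPolynomial.X u : MvPolynomial V ℝ)).coeff
        (Finsupp.equivFunOnFinite.symm fun v => outDeg A v)
      = (EE (WArcSet A) : ℝ) - (EO (WArcSet A) : ℝ) := by
  classical
  rw [lhs_eq, rhs_eq, ← Finset.sum_filter]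
  have hQ : (A.pi (Tset A)).filter
        (fun p => (∑ e ∈ A.attach, Finsupp.single (p e.1 e.2) 1)
          = Finsupp.equivFunOnFinite.symm fun v => outDeg A v)
      = (A.pi (Tset A)).filter
        (fun p => ∀ v, (A.attach.filter fun e => p e.1 e.2 = v).card = outDeg A v) :=
    Finset.filter_congr (fun p _ => by rw [cond_iff])
  rw [hQ]
  refine Finset.sum_bij (fun p _ => Phi A p) ?_ ?_ ?_ ?_
  · intro p hp
    rw [Finset.mem_filter] at hp
    obtain ⟨hpi, hbal⟩ := hp
    rw [Finset.mem_filter, Finset.mem_powerset]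
    exact ⟨Phi_subset hsimple (Finset.mem_pi.1 hpi), isEulerian_Phi hbal⟩
  · intro p hp p' hp' h
    funext e he
    exact Phi_injective h e he
  · intro S hS
    rw [Finset.mem_filter, Finset.mem_powerset] at hS
    obtain ⟨hsub, hE⟩ := hS
    obtain ⟨p, hp1, hp2⟩ := exists_p hsimple hsub hE
    refine ⟨p, ?_, hp2⟩
    rw [Finset.mem_filter]
    refine ⟨Finset.mem_pi.2 hp1, ?_⟩
    apply balance_of_eulerian
    rw [hp2]
    exact hE
  · intro p hp
    rw [Finset.mem_filter] at hp
    exact sign_Phi hsimple (Finset.mem_pi.1 hp.1)
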